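/- Let k ≥ 2, let ℒ be a volume-one metric structure on the wedge of k circles with volume entropy h_ℒ, and let f : (0,∞) → (0,∞) be a monotone non-increasing function with liminf_{x→∞} f(x)^{1/x} > e^{−h_ℒ}. Then C_f(ℒ) = Σ_{w ∈ 𝒞_k} f(ℓ_ℒ(w)) = ∞. -/

import Mathlib

open Filter Topology
open scoped ENNReal

namespace McShane

section Words

variable {α : Type*} [DecidableEq α]

/-- adjacent pair does not cancel -/
def Compat (a b : α × Bool) : Prop := ¬(a.1 = b.1 ∧ a.2 = !b.2)

/-- a word is reduced -/
def Reduced (l : List (α × Bool)) : Prop := List.Chain' Compat l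

theorem reduce_eq_self_of_reduced {l : List (α × Bool)} (h : Reduced l) :
    FreeGroup.reduce l = l := by
  induction l with
  | nil => rfl
  | cons a t ih =>
    have ht : Reduced t := h.tail
    rw [FreeGroup.reduce.cons, ih ht]
    cases t with
    | nil => rfl
    | cons b t' =>
      have : Compat a b := List.isChain_cons_cons.1 h |>.1
      simp only [Compat] at this
      simp [this]

theorem reduced_of_reduce_eq_self {l : List (α × Bool)} (h : FreeGroup.reduce l = l) :
    Reduced l := by
  induction l with
  | nil => exact List.isChain_nil
  | cons a t ih =>
    rw [FreeGroup.reduce.cons] at h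
    rcases ht : FreeGroup.reduce t with _ | ⟨b, t'⟩
    · rw [ht] at h
      have h2 : ([a] : List _) = a :: t := h
      injection h2 with _ h3
      rw [← h3]
      exact List.isChain_singleton a
    · rw [ht] at h
      have h : (if a.1 = b.1 ∧ a.2 = !b.2 then t' else a :: b :: t') = a :: t := h
      by_cases hc : a.1 = b.1 ∧ a.2 = !b.2
      · rw [if_pos hc] at h
        exfalso
        have := congrArg List.length h
        have hlt : (FreeGroup.reduce t).length ≤ t.length :=
          List.Sublist.length_le (FreeGroup.Red.sublist (FreeGroup.reduce.red))
        rw [ht] at hlt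
        simp at this hlt
        omega
      · rw [if_neg hc] at h
        have h2 : (b :: t' : List _) = t := by
          injection h with h1 h2
        have htr : FreeGroup.reduce t = t := by rw [ht, h2]
        have := ih htr
        rw [← h2] at this ⊢
        exact List.isChain_cons_cons.2 ⟨hc, this⟩

theorem reduced_iff {l : List (α × Bool)} : Reduced l ↔ FreeGroup.reduce l = l :=
  ⟨reduce_eq_self_of_reduced, reduced_of_reduce_eq_self⟩

theorem reduced_toWord (x : FreeGroup α) : Reduced x.toWord :=
  reduced_of_reduce_eq_self (FreeGroup.reduce_toWord x)

theorem toWord_mk_of_reduced {l : List (α × Bool)} (h : Reduced l) :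
    (FreeGroup.mk l).toWord = l := by
  rw [FreeGroup.toWord_mk, reduce_eq_self_of_reduced h]

/-- Cyclically reduced word: reduced and the last letter does not cancel the first. -/
def CR (l : List (α × Bool)) : Prop :=
  Reduced l ∧ ∀ a ∈ l.getLast?, ∀ b ∈ l.head?, Compat a b

theorem CR.reduced {l : List (α × Bool)} (h : CR l) : Reduced l := h.1

theorem reduced_invRev {l : List (α × Bool)} (h : Reduced l) :
    Reduced (FreeGroup.invRev l) := by
  have : FreeGroup.invRev l = ((FreeGroup.mk l)⁻¹).toWord := by
    rw [FreeGroup.toWord_inv, toWord_mk_of_reduced h]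
  rw [this]
  exact reduced_toWord _

theorem CR.rotate_one {l : List (α × Bool)} (h : CR l) : CR (l.rotate 1) := by
  rcases l with _ | ⟨x, t⟩
  · simpa using h
  rw [List.rotate_cons_succ, List.rotate_zero]
  obtain ⟨hred, hjun⟩ := h
  constructor
  · -- Reduced (t ++ [x])
    apply List.IsChain.append (hred.tail) (List.isChain_singleton x)
    intro a ha b hb
    simp only [List.head?_cons, Option.mem_def, Option.some.injEq] at hb
    subst hb
    have hlast : a ∈ (x :: t).getLast? := by
      rcases t with _ | ⟨c, t'⟩
      · simp at ha
      · rwa [List.getLast?_cons_cons]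
    have hhead : x ∈ (x :: t).head? := by simp
    exact hjun a hlast x hhead
  · -- the wrap-around pair of t ++ [x]
    intro a ha b hb
    rw [List.getLast?_concat] at ha
    simp only [Option.mem_def, Option.some.injEq] at ha
    subst ha
    rcases t with _ | ⟨c, t'⟩
    · simp only [List.nil_append, List.head?_cons, Option.mem_def, Option.some.injEq] at hb
      subst hb
      simp [Compat]
    · simp only [List.cons_append, List.head?_cons, Option.mem_def, Option.some.injEq] at hb
      subst hb
      exact (List.isChain_cons_cons.1 hred).1

theorem CR.rotate {l : List (α × Bool)} (h : CR l) (n : ℕ) : CR (l.rotate n) := by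
  induction n with
  | zero => simpa using h
  | succ n ih =>
    have := ih.rotate_one
    rwa [List.rotate_rotate] at this

theorem invRev_concat (v : List (α × Bool)) (x : α × Bool) :
    FreeGroup.invRev (v ++ [x]) = (x.1, !x.2) :: FreeGroup.invRev v := by
  simp [FreeGroup.invRev]

theorem rotate_concat' {β : Type*} (v : List β) (a : β) :
    (v ++ [a]).rotate ((v ++ [a]).length - 1) = a :: v := by
  have h1 : (v ++ [a]).length - 1 = v.length := by simp
  rw [h1, List.rotate_eq_drop_append_take (by simp), List.drop_left, List.take_left]
  rfl

end Words

section Conj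

variable {α : Type*} [DecidableEq α]

set_option maxHeartbeats 1000000 in
theorem conj_cr_rotate : ∀ (N : ℕ) (u : FreeGroup α), u.toWord.length ≤ N →
    ∀ (w z : List (α × Bool)), w ≠ [] → CR w → CR z →
    FreeGroup.mk z = u * FreeGroup.mk w * u⁻¹ → ∃ n, z = w.rotate n := by
  intro N
  induction N with
  | zero =>
    intro u hu w z hwne hw hz heq
    have hu1 : u = 1 := by
      rw [← FreeGroup.toWord_eq_nil_iff, ← List.length_eq_zero_iff]
      omega
    rw [hu1, one_mul, inv_one, mul_one] at heq
    refine ⟨0, ?_⟩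
    rw [List.rotate_zero]
    have := congrArg FreeGroup.toWord heq
    rwa [toWord_mk_of_reduced hz.reduced, toWord_mk_of_reduced hw.reduced] at this
  | succ N ih =>
    intro u hu w z hwne hw hz heq
    rcases List.eq_nil_or_concat u.toWord with hnil | ⟨v, x, hvx0⟩
    on_goal 2 => have hvx : u.toWord = v ++ [x] := by rw [hvx0, List.concat_eq_append]
    on_goal 2 => clear hvx0
    · -- u = 1 : same as base case
      have hu1 : u = 1 := FreeGroup.toWord_eq_nil_iff.1 hnil
      rw [hu1, one_mul, inv_one, mul_one] at heq
      refine ⟨0, ?_⟩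
      rw [List.rotate_zero]
      have := congrArg FreeGroup.toWord heq
      rwa [toWord_mk_of_reduced hz.reduced, toWord_mk_of_reduced hw.reduced] at this
    · -- u = mk v * mk [x]
      have hlu_red : Reduced u.toWord := reduced_toWord u
      have hv_red : Reduced v := by
        rw [hvx] at hlu_red; exact hlu_red.prefix ⟨[x], rfl⟩
      have huv : u = FreeGroup.mk v * FreeGroup.mk [x] := by
        conv_lhs => rw [← FreeGroup.mk_toWord (x := u), hvx]
        rw [FreeGroup.mul_mk]
      have hvlen : (FreeGroup.mk v).toWord.length ≤ N := by
        rw [toWord_mk_of_reduced hv_red]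
        have := congrArg List.length hvx
        simp at this
        omega
      obtain ⟨y, t, rfl⟩ := List.exists_cons_of_ne_nil hwne
      by_cases hA : x.1 = y.1 ∧ x.2 = !y.2
      · -- x cancels the head
        have hxinv : FreeGroup.mk [x] = (FreeGroup.mk [y])⁻¹ := by
          rw [FreeGroup.inv_mk]
          congr 1
          have : x = (y.1, !y.2) := Prod.ext hA.1 hA.2
          simp [FreeGroup.invRev, this]
        have key : FreeGroup.mk [x] * FreeGroup.mk (y :: t) * (FreeGroup.mk [x])⁻¹
            = FreeGroup.mk ((y :: t).rotate 1) := by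
          rw [List.rotate_cons_succ, List.rotate_zero, ← FreeGroup.mul_mk, hxinv, inv_inv]
          have : FreeGroup.mk (y :: t) = FreeGroup.mk [y] * FreeGroup.mk t := by
            rw [FreeGroup.mul_mk]; rfl
          rw [this]
          group
        have heq' : FreeGroup.mk z =
            FreeGroup.mk v * FreeGroup.mk ((y :: t).rotate 1) * (FreeGroup.mk v)⁻¹ := by
          rw [heq, huv]
          rw [← key]
          group
        have hrotne : (y :: t).rotate 1 ≠ [] := by
          intro hcon
          have := congrArg List.length hcon
          simp at this
        obtain ⟨m, hm⟩ := ih (FreeGroup.mk v) hvlen _ z hrotne (hw.rotate 1) hz heq'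
        refine ⟨1 + m, ?_⟩
        rw [← List.rotate_rotate]
        exact hm
      · by_cases hB : x = (y :: t).getLast (List.cons_ne_nil y t)
        · -- x⁻¹ cancels the last letter
          have hwne' : (y :: t) ≠ [] := List.cons_ne_nil y t
          have hsplit : (y :: t) = (y :: t).dropLast ++ [x] := by
            rw [hB]
            exact (List.dropLast_append_getLast hwne').symm
          have hrot : (y :: t).rotate ((y :: t).length - 1) = x :: (y :: t).dropLast := by
            conv_lhs => rw [hsplit]
            exact rotate_concat' _ _
          have key : FreeGroup.mk [x] * FreeGroup.mk (y :: t) * (FreeGroup.mk [x])⁻¹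
              = FreeGroup.mk ((y :: t).rotate ((y :: t).length - 1)) := by
            rw [hrot]
            conv_lhs => rw [hsplit]
            rw [← FreeGroup.mul_mk]
            have hgrp : FreeGroup.mk [x] *
                (FreeGroup.mk (y :: t).dropLast * FreeGroup.mk [x]) *
                (FreeGroup.mk [x])⁻¹
                = FreeGroup.mk [x] * FreeGroup.mk (y :: t).dropLast := by
              group
            rw [hgrp, FreeGroup.mul_mk]
            rfl
          have heq' : FreeGroup.mk z =
              FreeGroup.mk v * FreeGroup.mk ((y :: t).rotate ((y :: t).length - 1)) *
                (FreeGroup.mk v)⁻¹ := by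
            rw [heq, huv, ← key]
            group
          have hrotne : (y :: t).rotate ((y :: t).length - 1) ≠ [] := by
            intro hcon
            have := congrArg List.length hcon
            simp at this
          obtain ⟨m, hm⟩ := ih (FreeGroup.mk v) hvlen _ z hrotne (hw.rotate _) hz heq'
          refine ⟨((y :: t).length - 1) + m, ?_⟩
          rw [← List.rotate_rotate]
          exact hm
        · -- no cancellation at all: contradiction with z cyclically reduced
          exfalso
          have hA1ne : (v ++ [x]) ≠ [] := by simp
          have hA1red : Reduced (v ++ [x]) := by rwa [hvx] at hlu_red
          have hA3red : Reduced (FreeGroup.invRev (v ++ [x])) := reduced_invRev hA1red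
          have hu' : u = FreeGroup.mk (v ++ [x]) := by
            rw [← hvx, FreeGroup.mk_toWord]
          have hmkz : FreeGroup.mk z =
              FreeGroup.mk (((v ++ [x]) ++ (y :: t)) ++ FreeGroup.invRev (v ++ [x])) := by
            rw [heq, hu', FreeGroup.inv_mk, FreeGroup.mul_mk, FreeGroup.mul_mk]
          have hccred :
              Reduced (((v ++ [x]) ++ (y :: t)) ++ FreeGroup.invRev (v ++ [x])) := by
            apply List.IsChain.append
            · apply List.IsChain.append hA1red hw.reduced
              intro a ha b hb
              rw [List.getLast?_concat] at ha
              rw [List.head?_cons] at hb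
              simp only [Option.mem_def, Option.some.injEq] at ha hb
              subst ha
              subst hb
              exact hA
            · exact hA3red
            · intro a ha b hb
              rw [List.getLast?_append_of_ne_nil _ (List.cons_ne_nil y t)] at ha
              rw [List.getLast?_eq_getLast (List.cons_ne_nil y t)] at ha
              rw [invRev_concat, List.head?_cons] at hb
              simp only [Option.mem_def, Option.some.injEq] at ha hb
              subst ha
              subst hb
              intro hcon
              apply hB
              refine Prod.ext hcon.1.symm ?_
              have := hcon.2
              simp only at this
              rw [this]
              simp
          have hzc : z = ((v ++ [x]) ++ (y :: t)) ++ FreeGroup.invRev (v ++ [x]) := by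
            have := congrArg FreeGroup.toWord hmkz
            rwa [toWord_mk_of_reduced hz.reduced, toWord_mk_of_reduced hccred] at this
          obtain ⟨x₀, lu', hcons⟩ := List.exists_cons_of_ne_nil hA1ne
          have hhead : z.head? = some x₀ := by
            rw [hzc, List.head?_append_of_ne_nil _ (by simp),
              List.head?_append_of_ne_nil _ hA1ne, hcons, List.head?_cons]
          have hlast : z.getLast? = some (x₀.1, !x₀.2) := by
            rw [hzc, List.getLast?_append_of_ne_nil _ (by simp [FreeGroup.invRev, hcons]),
              hcons]
            have : FreeGroup.invRev (x₀ :: lu')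
                = FreeGroup.invRev lu' ++ [(x₀.1, !x₀.2)] := by
              simp [FreeGroup.invRev]
            rw [this, List.getLast?_concat]
          have := hz.2 (x₀.1, !x₀.2) (by rw [hlast]; rfl) x₀ (by rw [hhead]; rfl)
          exact this ⟨rfl, rfl⟩

end Conj

section Sigma

variable {α : Type*} [DecidableEq α] (a0 a1 : α)

/-- boolean for the prepended letter, chosen to avoid cancellation with the head -/
def hbb (g : FreeGroup α) : Bool :=
  match g.toWord.head? with
  | some a => if a.1 = a0 then a.2 else true
  | none => true

/-- boolean for the appended letter, chosen to avoid cancellation with the last letter -/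
def lbb (g : FreeGroup α) : Bool :=
  match g.toWord.getLast? with
  | some a => if a.1 = a1 then a.2 else true
  | none => true

/-- the cyclically reduced word obtained from `g` by adding one letter on each side -/
def sigw (g : FreeGroup α) : List (α × Bool) :=
  ((a0, hbb a0 g) :: g.toWord) ++ [(a1, lbb a1 g)]

theorem sigw_ne_nil (g : FreeGroup α) : sigw a0 a1 g ≠ [] := by simp [sigw]

theorem sigw_length (g : FreeGroup α) :
    (sigw a0 a1 g).length = g.toWord.length + 2 := by simp [sigw]

theorem sigw_injective : Function.Injective (sigw a0 a1) := by
  intro g g' hgg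
  have : ((a0, hbb a0 g) :: g.toWord ++ [(a1, lbb a1 g)]).dropLast.tail
      = ((a0, hbb a0 g') :: g'.toWord ++ [(a1, lbb a1 g')]).dropLast.tail := by
    rw [← sigw, ← sigw, hgg]
  rw [List.dropLast_concat, List.dropLast_concat, List.tail_cons, List.tail_cons] at this
  exact FreeGroup.toWord_injective this

variable {a0 a1}

theorem sigw_cr (hne : a0 ≠ a1) (g : FreeGroup α) : CR (sigw a0 a1 g) := by
  constructor
  · -- reduced
    apply List.IsChain.append
    · -- (a0,hbb) :: g.toWord
      rw [List.isChain_cons]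
      refine ⟨?_, reduced_toWord g⟩
      intro y hy
      intro hcon
      have hh : g.toWord.head? = some y := hy
      simp only [Compat, hbb, hh] at hcon
      rcases hcon with ⟨h1, h2⟩
      rw [if_pos h1.symm] at h2
      exact absurd h2 (by simp)
    · exact List.isChain_singleton _
    · intro a ha b hb'
      simp only [List.head?_cons, Option.mem_def, Option.some.injEq] at hb'
      subst hb'
      rcases eq_or_ne g.toWord [] with hnil | hnn
      · rw [hnil] at ha
        simp only [List.getLast?_singleton, Option.mem_def, Option.some.injEq] at ha
        subst ha
        exact fun hcon => hne hcon.1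
      · have hrw : ((a0, hbb a0 g) :: g.toWord).getLast? = g.toWord.getLast? := by
          rw [show (a0, hbb a0 g) :: g.toWord = [(a0, hbb a0 g)] ++ g.toWord from rfl,
            List.getLast?_append_of_ne_nil _ hnn]
        rw [hrw] at ha
        have hlast : g.toWord.getLast? = some a := ha
        intro hcon
        rcases hcon with ⟨h1, h2⟩
        simp only [lbb, hlast] at h2
        rw [if_pos h1] at h2
        exact absurd h2 (by simp)
  · -- the wrap-around pair
    intro a ha b hb'
    rw [sigw, List.getLast?_concat] at ha
    simp only [Option.mem_def, Option.some.injEq] at ha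
    subst ha
    rw [sigw] at hb'
    simp only [List.cons_append, List.head?_cons, Option.mem_def, Option.some.injEq] at hb'
    subst hb'
    intro hcon
    exact hne hcon.1.symm

end Sigma

noncomputable section Counting

/-- The ℒ-weighted length (duplicated here for auxiliary use). -/
def wlen' {k : ℕ} (L : Fin k → ℝ) (g : FreeGroup (Fin k)) : ℝ :=
  ((FreeGroup.toWord g).map fun x => L x.1).sum

theorem wlen'_nonneg {k : ℕ} {L : Fin k → ℝ} (hL : ∀ i, 0 < L i) (g : FreeGroup (Fin k)) :
    0 ≤ wlen' L g := by
  apply List.sum_nonneg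
  intro x hx
  obtain ⟨a, _, rfl⟩ := List.mem_map.1 hx
  exact (hL a.1).le

theorem le_wlen' {k : ℕ} {L : Fin k → ℝ} {lam : ℝ} (hlam : ∀ i, lam ≤ L i)
    (g : FreeGroup (Fin k)) :
    (g.toWord.length : ℝ) * lam ≤ wlen' L g := by
  have h := List.card_nsmul_le_sum (l := (FreeGroup.toWord g).map fun x => L x.1) (n := lam) ?_
  · simpa [nsmul_eq_mul, wlen'] using h
  · intro x hx
    obtain ⟨a, _, rfl⟩ := List.mem_map.1 hx
    exact hlam a.1

theorem ball_finite {k : ℕ} {L : Fin k → ℝ} {lam : ℝ} (hlam0 : 0 < lam)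
    (hlam : ∀ i, lam ≤ L i) (R : ℝ) :
    {g : FreeGroup (Fin k) | wlen' L g ≤ R}.Finite := by
  have hsub : {g : FreeGroup (Fin k) | wlen' L g ≤ R} ⊆
      FreeGroup.toWord ⁻¹' {l : List (Fin k × Bool) | l.length ≤ Nat.floor (R / lam)} := by
    intro g hg
    simp only [Set.mem_setOf_eq] at hg ⊢
    apply Nat.le_floor
    rw [le_div_iff₀ hlam0]
    exact le_trans (le_wlen' hlam g) hg
  exact Set.Finite.subset ((List.finite_length_le _ _).preimage
    FreeGroup.toWord_injective.injOn) hsub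

theorem wlen'_sigw {k : ℕ} (L : Fin k → ℝ) {i0 i1 : Fin k} (hne : i0 ≠ i1)
    (g : FreeGroup (Fin k)) :
    wlen' L (FreeGroup.mk (sigw i0 i1 g)) = L i0 + wlen' L g + L i1 := by
  rw [wlen', toWord_mk_of_reduced (sigw_cr hne g).reduced, sigw]
  simp [wlen']
  ring

theorem sigw_mk_ne_one {k : ℕ} {i0 i1 : Fin k} (hne : i0 ≠ i1) (g : FreeGroup (Fin k)) :
    FreeGroup.mk (sigw i0 i1 g) ≠ 1 := by
  intro hcon
  have := congrArg FreeGroup.toWord hcon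
  rw [toWord_mk_of_reduced (sigw_cr hne g).reduced, FreeGroup.toWord_one] at this
  exact sigw_ne_nil _ _ g this

theorem count_classes {k : ℕ} {L : Fin k → ℝ} {lam : ℝ} (hlam0 : 0 < lam)
    (hlam : ∀ i, lam ≤ L i) (hL : ∀ i, 0 < L i) {i0 i1 : Fin k} (hne : i0 ≠ i1) (R : ℝ)
    (hR0 : 0 ≤ R) :
    ∃ T : Finset {c : ConjClasses (FreeGroup (Fin k)) // c ≠ 1},
      (Nat.card {g : FreeGroup (Fin k) // wlen' L g ≤ R}) ≤ (Nat.floor (R / lam) + 2) * T.card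
      ∧ ∀ c ∈ T, 0 < sInf (wlen' L '' (c : ConjClasses (FreeGroup (Fin k))).carrier)
        ∧ sInf (wlen' L '' (c : ConjClasses (FreeGroup (Fin k))).carrier) ≤ R + (L i0 + L i1) := by
  classical
  set S := {g : FreeGroup (Fin k) | wlen' L g ≤ R} with hS
  have hSfin : S.Finite := ball_finite hlam0 hlam R
  set F := hSfin.toFinset with hF
  have hmemF : ∀ g, g ∈ F ↔ wlen' L g ≤ R := by
    intro g; rw [hF, Set.Finite.mem_toFinset]; rfl
  set Φ : FreeGroup (Fin k) → ConjClasses (FreeGroup (Fin k)) :=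
    fun g => ConjClasses.mk (FreeGroup.mk (sigw i0 i1 g)) with hΦ
  set M := Nat.floor (R / lam) + 2 with hM
  -- length bound for elements of F
  have hlen_le : ∀ g ∈ F, g.toWord.length ≤ Nat.floor (R / lam) := by
    intro g hg
    rw [hmemF] at hg
    apply Nat.le_floor
    rw [le_div_iff₀ hlam0]
    exact le_trans (le_wlen' hlam g) hg
  -- fiber bound
  have hfib : ∀ c ∈ F.image Φ, (F.filter (fun g => Φ g = c)).card ≤ M := by
    intro c hc
    obtain ⟨g₀, hg₀F, hg₀⟩ := Finset.mem_image.1 hc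
    set w₀ := sigw i0 i1 g₀ with hw₀
    have hw₀len : w₀.length ≤ M := by
      rw [hw₀, sigw_length, hM]
      have := hlen_le g₀ hg₀F
      omega
    have hw₀pos : 0 < w₀.length := by rw [hw₀, sigw_length]; omega
    set T₀ : Finset (List (Fin k × Bool)) := (Finset.range M).image (fun n => w₀.rotate n)
      with hT₀
    refine le_trans (Finset.card_le_card_of_injOn (t := T₀) (fun g => sigw i0 i1 g) ?_
      ((sigw_injective i0 i1).injOn)) ?_
    · -- maps into rotations of w₀
      intro g hg
      rw [Finset.mem_coe, Finset.mem_filter] at hg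
      obtain ⟨hgF, hgc⟩ := hg
      have hconj : IsConj (FreeGroup.mk w₀) (FreeGroup.mk (sigw i0 i1 g)) := by
        apply ConjClasses.mk_eq_mk_iff_isConj.1
        show Φ g₀ = Φ g
        rw [hg₀, hgc]
      obtain ⟨u, hu⟩ := isConj_iff.1 hconj
      obtain ⟨n, hn⟩ := conj_cr_rotate u.toWord.length u le_rfl w₀ (sigw i0 i1 g)
        (sigw_ne_nil _ _ _) (sigw_cr hne g₀) (sigw_cr hne g) hu.symm
      rw [hT₀]
      refine Finset.mem_image.2 ⟨n % w₀.length, Finset.mem_range.2 ?_, ?_⟩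
      · exact lt_of_lt_of_le (Nat.mod_lt _ hw₀pos) hw₀len
      · rw [List.rotate_mod]
        exact hn.symm
    · rw [hT₀]
      exact le_trans (Finset.card_image_le) (by simp)
  have hcount : F.card ≤ M * (F.image Φ).card := Finset.card_le_mul_card_image F M hfib
  -- all image classes are nontrivial
  have himg_ne1 : ∀ c ∈ F.image Φ, c ≠ (1 : ConjClasses (FreeGroup (Fin k))) := by
    intro c hc hcon
    obtain ⟨g, hgF, rfl⟩ := Finset.mem_image.1 hc
    rw [hΦ] at hcon
    simp only at hcon
    rw [ConjClasses.one_eq_mk_one] at hcon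
    have := isConj_one_left.1 (ConjClasses.mk_eq_mk_iff_isConj.1 hcon)
    exact sigw_mk_ne_one hne g this
  -- hlen bounds
  have himg_hlen : ∀ c ∈ F.image Φ,
      0 < sInf (wlen' L '' c.carrier) ∧ sInf (wlen' L '' c.carrier) ≤ R + (L i0 + L i1) := by
    intro c hc
    obtain ⟨g, hgF, rfl⟩ := Finset.mem_image.1 hc
    have hmem : FreeGroup.mk (sigw i0 i1 g) ∈ (Φ g).carrier := by
      rw [ConjClasses.mem_carrier_iff_mk_eq]
    have hbdd : BddBelow (wlen' L '' (Φ g).carrier) := by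
      refine ⟨0, ?_⟩
      rintro y ⟨x, -, rfl⟩
      exact wlen'_nonneg hL x
    constructor
    · have hlow : ∀ y ∈ wlen' L '' (Φ g).carrier, lam ≤ y := by
        rintro y ⟨x, hx, rfl⟩
        rw [ConjClasses.mem_carrier_iff_mk_eq] at hx
        have hx1 : x ≠ 1 := by
          intro hcon
          apply himg_ne1 _ hc
          rw [← hx, hcon, ConjClasses.one_eq_mk_one]
        have hxlen : 1 ≤ x.toWord.length := by
          rcases Nat.eq_zero_or_pos x.toWord.length with h0 | h1
          · exact absurd (FreeGroup.toWord_eq_nil_iff.1 (List.length_eq_zero_iff.1 h0)) hx1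
          · exact h1
        calc lam = 1 * lam := (one_mul lam).symm
          _ ≤ (x.toWord.length : ℝ) * lam := by
              apply mul_le_mul_of_nonneg_right _ hlam0.le
              exact_mod_cast hxlen
          _ ≤ wlen' L x := le_wlen' hlam x
      exact lt_of_lt_of_le hlam0 (le_csInf ⟨_, Set.mem_image_of_mem _ hmem⟩ hlow)
    · refine le_trans (csInf_le hbdd (Set.mem_image_of_mem _ hmem)) ?_
      rw [wlen'_sigw L hne g]
      have : wlen' L g ≤ R := (hmemF g).1 hgF
      linarith
  -- assemble T
  refine ⟨(F.image Φ).subtype (· ≠ 1), ?_, ?_⟩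
  · have hTcard : ((F.image Φ).subtype (· ≠ 1)).card = (F.image Φ).card := by
      rw [Finset.card_subtype, Finset.filter_true_of_mem himg_ne1]
    rw [hTcard]
    have hNat : Nat.card {g : FreeGroup (Fin k) // wlen' L g ≤ R} = F.card := by
      have h1 : Nat.card S = S.ncard := Nat.card_coe_set_eq S
      rw [Set.ncard_eq_toFinset_card S hSfin] at h1
      exact h1
    rw [hNat]
    exact hcount
  · intro c hcT
    have : (c : ConjClasses (FreeGroup (Fin k))) ∈ F.image Φ := by
      simpa using Finset.mem_subtype.1 hcT
    exact himg_hlen _ this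

end Counting

theorem exp_quad {x : ℝ} (hx : 0 ≤ x) : x ^ 2 / 4 ≤ Real.exp x := by
  have h1 : x / 2 + 1 ≤ Real.exp (x / 2) := Real.add_one_le_exp (x / 2)
  have h2 : Real.exp (x / 2) * Real.exp (x / 2) = Real.exp x := by
    rw [← Real.exp_add]
    ring_nf
  nlinarith [Real.exp_pos (x / 2)]

theorem wlen'_one {k : ℕ} (L : Fin k → ℝ) : wlen' L 1 = 0 := by
  simp [wlen', FreeGroup.toWord_one]

/-- The ℒ-weighted length of the freely reduced form of `g`: the sum of `L i`
over all occurrences of `aᵢ^{±1}` in the reduced word of `g`. -/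
noncomputable def wlen {k : ℕ} (L : Fin k → ℝ) (g : FreeGroup (Fin k)) : ℝ :=
  ((FreeGroup.toWord g).map fun x => L x.1).sum

/-- The hyperbolic length of a conjugacy class: the infimum of the ℒ-weighted
lengths of its representatives. For positive edge lengths this equals
`∑ mᵢ·L i` where `mᵢ` counts occurrences of `aᵢ^{±1}` in the cyclically reduced form. -/
noncomputable def hlen {k : ℕ} (L : Fin k → ℝ) (c : ConjClasses (FreeGroup (Fin k))) : ℝ :=
  sInf (wlen L '' c.carrier)

/-- The open simplex `Δ_k` of volume-one metric structures on the wedge of `k` circles. -/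
def simplex (k : ℕ) : Set (Fin k → ℝ) :=
  {L | (∀ i, 0 < L i) ∧ ∑ i, L i = 1}

/-- The barycentric point `ℒ* = (1/k, …, 1/k)`. -/
noncomputable def Lstar (k : ℕ) : Fin k → ℝ := fun _ => 1 / k

/-- `g` is primitive iff it belongs to some free basis of the free group,
equivalently it is the image of a basis element under an automorphism. -/
def IsPrimitive {k : ℕ} (g : FreeGroup (Fin k)) : Prop :=
  ∃ (e : FreeGroup (Fin k) ≃* FreeGroup (Fin k)) (i : Fin k), e (FreeGroup.of i) = g

/-- `C_f(ℒ) = ∑_{w ∈ 𝒞_k} f(ℓ_ℒ(w))`, the sum over all nontrivial conjugacy classes. -/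
noncomputable def Cf {k : ℕ} (f : ℝ → ℝ) (L : Fin k → ℝ) : ℝ≥0∞ :=
  ∑' c : {c : ConjClasses (FreeGroup (Fin k)) // c ≠ 1}, ENNReal.ofReal (f (hlen L c.1))

/-- `P_f(ℒ) = ∑_{w ∈ 𝒫_k} f(ℓ_ℒ(w))`, the sum over conjugacy classes of primitive elements. -/
noncomputable def Pf {k : ℕ} (f : ℝ → ℝ) (L : Fin k → ℝ) : ℝ≥0∞ :=
  ∑' c : {c : ConjClasses (FreeGroup (Fin k)) // ∃ g, IsPrimitive g ∧ ConjClasses.mk g = c},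
    ENNReal.ofReal (f (hlen L c.1))

theorem wlen_eq_wlen' {k : ℕ} (L : Fin k → ℝ) : wlen L = wlen' L := rfl

set_option maxHeartbeats 2000000 in
/-- If `L ∈ Δ_k` has volume entropy `h` and `f` is positive, non-increasing with
`liminf_{x→∞} f(x)^{1/x} > e^{−h}`, then `C_f(L) = ∞`. -/
theorem mcshane_stmt10 (k : ℕ) (hk : 2 ≤ k) (L : Fin k → ℝ) (hL : L ∈ simplex k)
    (h : ℝ)
    (hent : Tendsto (fun R : ℝ =>
        Real.log (Nat.card {g : FreeGroup (Fin k) // wlen L g ≤ R}) / R) atTop (𝓝 h))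
    (f : ℝ → ℝ)
    (hf_pos : ∀ x > (0:ℝ), 0 < f x)
    (hf_anti : AntitoneOn f (Set.Ioi 0))
    (hf_liminf : Real.exp (-h) < liminf (fun x : ℝ => f x ^ (1 / x)) atTop) :
    Cf f L = ⊤ := by
  classical
  obtain ⟨hLpos, -⟩ := hL
  have hk0 : 0 < k := by omega
  set i0 : Fin k := ⟨0, by omega⟩ with hi0
  set i1 : Fin k := ⟨1, by omega⟩ with hi1
  have hne : i0 ≠ i1 := by
    intro hcon
    rw [hi0, hi1, Fin.mk.injEq] at hcon
    omega
  -- minimal edge length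
  obtain ⟨imin, -, hmin⟩ := Finset.exists_min_image Finset.univ L ⟨i0, Finset.mem_univ _⟩
  set lam := L imin with hlamdef
  have hlam0 : 0 < lam := hLpos imin
  have hlam : ∀ i, lam ≤ L i := fun i => hmin i (Finset.mem_univ i)
  set c2 := L i0 + L i1 with hc2
  have hc2pos : 0 < c2 := add_pos (hLpos i0) (hLpos i1)
  -- choice of θ
  set lf := liminf (fun x : ℝ => f x ^ (1 / x)) atTop with hlf
  set θ := (Real.exp (-h) + lf) / 2 with hθ
  have hθ1 : Real.exp (-h) < θ := by rw [hθ]; linarith [hf_liminf]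
  have hθ2 : θ < lf := by rw [hθ]; linarith [hf_liminf]
  have hθpos : 0 < θ := lt_trans (Real.exp_pos _) hθ1
  have hcob : IsBoundedUnder (· ≥ ·) atTop (fun x : ℝ => f x ^ (1 / x)) := by
    apply isBoundedUnder_of_eventually_ge (a := 0)
    filter_upwards [eventually_ge_atTop (1 : ℝ)] with x hx
    have hx0 : (0 : ℝ) < x := by linarith
    exact Real.rpow_nonneg (hf_pos x hx0).le _
  have hev1 : ∀ᶠ x in atTop, θ < f x ^ (1 / x) := eventually_lt_of_lt_liminf hθ2 hcob
  obtain ⟨X₀, hX₀⟩ := eventually_atTop.1 (hev1.and (eventually_ge_atTop (1 : ℝ)))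
  have hfge : ∀ x, X₀ ≤ x → θ ^ x ≤ f x := by
    intro x hx
    obtain ⟨h1, h2⟩ := hX₀ x hx
    have hx0 : (0 : ℝ) < x := by linarith
    have hfx0 : 0 ≤ f x := (hf_pos x hx0).le
    calc θ ^ x ≤ (f x ^ (1 / x)) ^ x := by
          apply Real.rpow_le_rpow hθpos.le h1.le hx0.le
      _ = f x := by
          rw [← Real.rpow_mul hfx0, one_div, inv_mul_cancel₀ (ne_of_gt hx0), Real.rpow_one]
  -- choice of ε
  have hlogθ : -h < Real.log θ := (Real.lt_log_iff_exp_lt hθpos).2 hθ1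
  set ε := (h + Real.log θ) / 2 with hε
  have hε0 : 0 < ε := by rw [hε]; linarith
  -- entropy lower bound, eventually
  have hcard : ∀ᶠ R in atTop, Real.exp ((h - ε) * R) ≤
      (Nat.card {g : FreeGroup (Fin k) // wlen L g ≤ R} : ℝ) := by
    have h1 : ∀ᶠ R in atTop, h - ε ≤
        Real.log (Nat.card {g : FreeGroup (Fin k) // wlen L g ≤ R}) / R :=
      hent.eventually (le_mem_nhds (by linarith))
    filter_upwards [h1, eventually_gt_atTop (0 : ℝ)] with R h2 h3
    have hfin : ({g : FreeGroup (Fin k) | wlen L g ≤ R}).Finite := by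
      rw [wlen_eq_wlen']
      exact ball_finite hlam0 hlam R
    haveI : Finite {g : FreeGroup (Fin k) // wlen L g ≤ R} := hfin.to_subtype
    haveI : Nonempty {g : FreeGroup (Fin k) // wlen L g ≤ R} := by
      refine ⟨⟨1, ?_⟩⟩
      show wlen L 1 ≤ R
      rw [wlen_eq_wlen', wlen'_one]
      linarith
    have hcpos : (0 : ℝ) < (Nat.card {g : FreeGroup (Fin k) // wlen L g ≤ R} : ℝ) := by
      exact_mod_cast Nat.card_pos
    have h4 : (h - ε) * R ≤ Real.log (Nat.card {g : FreeGroup (Fin k) // wlen L g ≤ R}) := by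
      rw [← le_div_iff₀ h3]
      exact h2
    exact (Real.le_log_iff_exp_le hcpos).1 h4
  obtain ⟨R₁, hR₁⟩ := eventually_atTop.1 hcard
  -- suppose for contradiction that the sum is finite
  by_contra hne_top
  have hlt : Cf f L < ⊤ := lt_top_iff_ne_top.2 hne_top
  set C := (Cf f L).toReal + 1 with hC
  have hC1 : 1 ≤ C := by
    rw [hC]
    have := ENNReal.toReal_nonneg (a := Cf f L)
    linarith
  have hC0 : 0 < C := by linarith
  -- constants
  set B := 1 / lam + 2 with hB
  have hB0 : 0 < B := by rw [hB]; positivity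
  set A := Real.exp (c2 * Real.log θ) * ε ^ 2 / 4 with hA
  have hA0 : 0 < A := by rw [hA]; positivity
  -- choice of R
  set R := max (max 1 (max R₁ X₀)) (C * B / A) with hR
  have hR1' : (1 : ℝ) ≤ R := le_trans (le_max_left _ _) (le_max_left _ _)
  have hR0 : (0 : ℝ) ≤ R := by linarith
  have hRR₁ : R₁ ≤ R := le_trans (le_trans (le_max_left _ _) (le_max_right _ _))
    (le_max_left _ _)
  have hRX₀ : X₀ ≤ R := le_trans (le_trans (le_max_right _ _) (le_max_right _ _))
    (le_max_left _ _)
  have hRA : C * B / A ≤ R := le_max_right _ _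
  have hAR : C * B ≤ A * R := by
    rw [div_le_iff₀ hA0] at hRA
    linarith
  -- counting
  obtain ⟨T, hT1, hT2⟩ := count_classes hlam0 hlam hLpos hne R hR0
  -- real-number estimate
  set M' : ℝ := ((Nat.floor (R / lam) : ℝ) + 2) with hM'
  have hM'pos : 0 < M' := by
    rw [hM']
    positivity
  have hMle : M' ≤ B * R := by
    rw [hM', hB]
    have h5 : (Nat.floor (R / lam) : ℝ) ≤ R / lam := Nat.floor_le (by positivity)
    have h6 : R / lam = (1 / lam) * R := by ring
    nlinarith
  have hcardR : Real.exp ((h - ε) * R) ≤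
      (Nat.card {g : FreeGroup (Fin k) // wlen L g ≤ R} : ℝ) := hR₁ R hRR₁
  have hT1' : (Nat.card {g : FreeGroup (Fin k) // wlen L g ≤ R} : ℝ) ≤ M' * T.card := by
    rw [hM']
    have := hT1
    rw [wlen_eq_wlen']
    push_cast
    exact_mod_cast Nat.cast_le.2 this
  have hTlow : Real.exp ((h - ε) * R) / M' ≤ (T.card : ℝ) := by
    rw [div_le_iff₀ hM'pos]
    calc Real.exp ((h - ε) * R) ≤ M' * T.card := le_trans hcardR hT1'
      _ = (T.card : ℝ) * M' := by ring
  have hfR : θ ^ (R + c2) ≤ f (R + c2) := hfge _ (by linarith)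
  have hθR : θ ^ (R + c2) = Real.exp ((R + c2) * Real.log θ) := by
    rw [Real.rpow_def_of_pos hθpos, mul_comm]
  have hrpos : (0 : ℝ) < θ ^ (R + c2) := Real.rpow_pos_of_pos hθpos _
  -- key real inequality
  have hkey : C ≤ (T.card : ℝ) * f (R + c2) := by
    have e1 : Real.exp ((h - ε) * R) * θ ^ (R + c2)
        = Real.exp (c2 * Real.log θ) * Real.exp (ε * R) := by
      rw [hθR, ← Real.exp_add, ← Real.exp_add]
      congr 1
      have hεe : h - ε + Real.log θ = ε := by rw [hε]; ring
      linear_combination R * hεe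
    have hq : (ε * R) ^ 2 / 4 ≤ Real.exp (ε * R) := exp_quad (by positivity)
    have e2 : A * R ^ 2 ≤ Real.exp ((h - ε) * R) * θ ^ (R + c2) := by
      rw [e1, hA]
      have := Real.exp_pos (c2 * Real.log θ)
      nlinarith
    have e3 : C * M' ≤ Real.exp ((h - ε) * R) * θ ^ (R + c2) := by
      refine le_trans ?_ e2
      calc C * M' ≤ C * (B * R) := by nlinarith
        _ = (C * B) * R := by ring
        _ ≤ (A * R) * R := by nlinarith
        _ = A * R ^ 2 := by ring
    have e4 : C ≤ Real.exp ((h - ε) * R) / M' * θ ^ (R + c2) := by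
      rw [div_mul_eq_mul_div, le_div_iff₀ hM'pos]
      linarith
    refine le_trans e4 ?_
    apply mul_le_mul hTlow hfR hrpos.le (Nat.cast_nonneg _)
  -- transfer to ENNReal
  have hterm : ∀ c ∈ T, ENNReal.ofReal (f (R + c2)) ≤ ENNReal.ofReal (f (hlen L c.1)) := by
    intro c hcT
    obtain ⟨hpos, hle⟩ := hT2 c hcT
    apply ENNReal.ofReal_le_ofReal
    have hp : 0 < hlen L c.1 := by
      rw [hlen, wlen_eq_wlen']
      exact hpos
    have hl : hlen L c.1 ≤ R + c2 := by
      rw [hlen, wlen_eq_wlen']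
      exact hle
    exact hf_anti (Set.mem_Ioi.2 hp) (Set.mem_Ioi.2 (by linarith)) hl
  have hsum1 : T.card • ENNReal.ofReal (f (R + c2)) ≤
      ∑ c ∈ T, ENNReal.ofReal (f (hlen L c.1)) :=
    Finset.card_nsmul_le_sum T _ _ hterm
  have hsum2 : ∑ c ∈ T, ENNReal.ofReal (f (hlen L c.1)) ≤ Cf f L := ENNReal.sum_le_tsum T
  have hofC : ENNReal.ofReal C ≤ Cf f L := by
    refine le_trans ?_ (le_trans hsum1 hsum2)
    rw [nsmul_eq_mul]
    calc ENNReal.ofReal C ≤ ENNReal.ofReal ((T.card : ℝ) * f (R + c2)) :=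
          ENNReal.ofReal_le_ofReal hkey
      _ = ENNReal.ofReal (T.card : ℝ) * ENNReal.ofReal (f (R + c2)) :=
          ENNReal.ofReal_mul (Nat.cast_nonneg _)
      _ = (T.card : ℝ≥0∞) * ENNReal.ofReal (f (R + c2)) := by
          rw [ENNReal.ofReal_natCast]
  -- contradiction
  have hfinal : C ≤ (Cf f L).toReal := by
    have := ENNReal.toReal_mono hne_top hofC
    rwa [ENNReal.toReal_ofReal hC0.le] at this
  rw [hC] at hfinal
  linarith

end McShane
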